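/- Let R > 1 and let (a_k)_{k∈ℤ} be complex numbers with ‖φ‖ := |a₀| + Σ_{k=1}^∞ (|a_k| + |a_{-k}|) R^k < ∞. For n ≥ 1, the n-th iterated direct image under F(z) = z² has coefficient sequence k ↦ a_{2ⁿk}, and satisfies the superconvergence estimate |a₀ - a₀| + Σ_{k=1}^∞ (|a_{2ⁿk}| + |a_{-2ⁿk}|) R^k ≤ (R/R^{2ⁿ}) ‖φ‖; in particular ‖(F_*)ⁿφ - a₀ dz/z‖ → 0 as n → ∞. -/

import Mathlib

open Filter

/-- Superconvergence of the iterated direct images under `F(z) = z²`: for a Laurent form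
`φ = (Σ_k a_k z^k) dz/z` with `‖φ‖ = |a₀| + Σ_{k≥1}(|a_k|+|a_{-k}|)R^k < ∞`, the `n`-th
iterate `(F_*)ⁿφ` has coefficients `a_{2ⁿk}` and
`‖(F_*)ⁿφ - a₀ dz/z‖ ≤ (R/R^{2ⁿ})‖φ‖` for `n ≥ 1`; in particular
`‖(F_*)ⁿφ - a₀ dz/z‖ → 0`. -/
theorem squaring_superconvergence (R : ℝ) (hR : 1 < R) (a : ℤ → ℂ)
    (hsum : Summable (fun k : ℕ =>
      (‖a (k + 1 : ℕ)‖ + ‖a (-(k + 1 : ℕ) : ℤ)‖) * R ^ (k + 1))) :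
    (∀ n : ℕ, 1 ≤ n →
      ∑' k : ℕ, (‖a ((2 ^ n : ℤ) * (k + 1 : ℕ))‖ + ‖a (-((2 ^ n : ℤ) * (k + 1 : ℕ)))‖)
          * R ^ (k + 1)
        ≤ (R / R ^ (2 ^ n)) *
          (‖a 0‖ + ∑' k : ℕ, (‖a (k + 1 : ℕ)‖ + ‖a (-(k + 1 : ℕ) : ℤ)‖) * R ^ (k + 1))) ∧
    Tendsto (fun n : ℕ =>
        ∑' k : ℕ, (‖a ((2 ^ n : ℤ) * (k + 1 : ℕ))‖ + ‖a (-((2 ^ n : ℤ) * (k + 1 : ℕ)))‖)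
          * R ^ (k + 1))
      atTop (nhds 0) := by
  have hR0 : (0:ℝ) < R := lt_trans one_pos hR
  set t : ℕ → ℝ := fun k => (‖a (k + 1 : ℕ)‖ + ‖a (-(k + 1 : ℕ) : ℤ)‖) * R ^ (k + 1) with ht
  have htnn : ∀ k, 0 ≤ t k := fun k =>
    mul_nonneg (add_nonneg (norm_nonneg _) (norm_nonneg _)) (by positivity)
  set g : ℕ → ℕ → ℝ := fun n k =>
    (‖a ((2 ^ n : ℤ) * (k + 1 : ℕ))‖ + ‖a (-((2 ^ n : ℤ) * (k + 1 : ℕ)))‖) * R ^ (k + 1)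
    with hg
  set f : ℕ → ℕ → ℕ := fun n k => 2 ^ n * (k + 1) - 1 with hf
  have hfk : ∀ n k, f n k + 1 = 2 ^ n * (k + 1) := by
    intro n k
    have h1 : 1 ≤ 2 ^ n * (k + 1) :=
      Nat.one_le_iff_ne_zero.mpr (by positivity)
    simp only [hf]
    omega
  have hfinj : ∀ n, Function.Injective (f n) := by
    intro n k l h
    have h2 : 2 ^ n * (k + 1) = 2 ^ n * (l + 1) := by
      rw [← hfk n k, ← hfk n l, h]
    have := Nat.eq_of_mul_eq_mul_left (Nat.pow_pos (n := n) two_pos) h2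
    omega
  have hcast : ∀ n k, (2 ^ n : ℤ) * (k + 1 : ℕ) = ((f n k + 1 : ℕ) : ℤ) := by
    intro n k
    rw [hfk n k]
    push_cast
    ring
  have hptwise : ∀ n k, g n k ≤ (R / R ^ (2 ^ n)) * t (f n k) := by
    intro n k
    have hb : g n k = (‖a ((f n k + 1 : ℕ) : ℤ)‖ + ‖a (-((f n k + 1 : ℕ) : ℤ))‖) * R ^ (k + 1) := by
      simp only [hg, hcast n k]
    have htf : t (f n k) = (‖a ((f n k + 1 : ℕ) : ℤ)‖ + ‖a (-((f n k + 1 : ℕ) : ℤ))‖)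
        * R ^ (2 ^ n * (k + 1)) := by
      simp only [ht, hfk n k]
    rw [hb, htf]
    have hexp : (R / R ^ (2 ^ n)) * ((‖a ((f n k + 1 : ℕ) : ℤ)‖ + ‖a (-((f n k + 1 : ℕ) : ℤ))‖)
        * R ^ (2 ^ n * (k + 1)))
        = (‖a ((f n k + 1 : ℕ) : ℤ)‖ + ‖a (-((f n k + 1 : ℕ) : ℤ))‖) * R ^ (2 ^ n * k + 1) := by
      have hE : R ^ (2 ^ n * (k + 1)) * R = R ^ (2 ^ n * k + 1) * R ^ (2 ^ n) := by
        rw [← pow_succ, ← pow_add]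
        congr 1
        ring
      have hE2 : R ^ (2 ^ n * (k + 1)) = R ^ (2 ^ n * k + 1) * R ^ (2 ^ n) / R :=
        (eq_div_iff (ne_of_gt hR0)).mpr hE
      rw [hE2]
      field_simp
    rw [hexp]
    apply mul_le_mul_of_nonneg_left _ (add_nonneg (norm_nonneg _) (norm_nonneg _))
    apply pow_le_pow_right₀ (le_of_lt hR)
    have : k ≤ 2 ^ n * k := Nat.le_mul_of_pos_left k (Nat.pow_pos (n := n) two_pos)
    omega
  have hgnn : ∀ n k, 0 ≤ g n k := fun n k =>
    mul_nonneg (add_nonneg (norm_nonneg _) (norm_nonneg _)) (by positivity)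
  have hc0 : ∀ n, 0 ≤ R / R ^ (2 ^ n) := fun n => by positivity
  have hsum2 : ∀ n, Summable (fun k => (R / R ^ (2 ^ n)) * t (f n k)) := by
    intro n
    exact (hsum.comp_injective (hfinj n)).mul_left _
  have hgsum : ∀ n, Summable (g n) := fun n =>
    Summable.of_nonneg_of_le (hgnn n) (hptwise n) (hsum2 n)
  have hkey : ∀ n, ∑' k, g n k ≤ (R / R ^ (2 ^ n)) * ∑' k, t k := by
    intro n
    calc ∑' k, g n k ≤ ∑' k, (R / R ^ (2 ^ n)) * t k := by
          apply Summable.tsum_le_tsum_of_inj (f n) (hfinj n)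
            (fun c _ => mul_nonneg (hc0 n) (htnn c)) (hptwise n) (hgsum n)
            (hsum.mul_left _)
      _ = (R / R ^ (2 ^ n)) * ∑' k, t k := tsum_mul_left
  have htsumnn : 0 ≤ ∑' k, t k := tsum_nonneg htnn
  constructor
  · intro n _
    refine (hkey n).trans ?_
    apply mul_le_mul_of_nonneg_left _ (hc0 n)
    linarith [norm_nonneg (a 0)]
  · have hdiv : Tendsto (fun n : ℕ => R / R ^ (2 ^ n)) atTop (nhds 0) := by
      apply Tendsto.div_atTop (tendsto_const_nhds)
      exact (tendsto_pow_atTop_atTop_of_one_lt hR).comp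
        (tendsto_pow_atTop_atTop_of_one_lt one_lt_two)
    have h0 : Tendsto (fun n : ℕ => (R / R ^ (2 ^ n)) * ∑' k, t k) atTop (nhds 0) := by
      simpa using hdiv.mul_const (∑' k, t k)
    exact squeeze_zero (fun n => tsum_nonneg (hgnn n)) hkey h0
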